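/- Composition of causal transformations: if (κ₁,ρ₁): 𝒞¹→𝒞² and (κ₂,ρ₂): 𝒞²→𝒞³ are causal transformations and (κ₁,ρ₁) is an abstraction (i.e. ρ₁: T¹→T² is surjective), then the pair (κ₁∘κ₂, ρ₁∘ρ₂): 𝒞¹→𝒞³, where (κ₁∘κ₂)(ω,A) = ∫κ₁(ω,dω₂)κ₂(ω₂,A), is a causal transformation; in particular it is admissible and satisfies both distributional and interventional consistency. -/

import Mathlib

open MeasureTheory

/-- A causal space (Park et al.): a probability space `(Ω, ℋ, ℙ)` on a product measurable
space together with a family of sub-σ-algebras `ℋ_S` indexed by subsets `S` of the index set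
`T`, and a causal mechanism `𝕂 = {K_S}`, where each `K_S` is a transition probability kernel
from `(Ω, ℋ_S)` into `(Ω, ℋ)` satisfying the two causal space axioms. -/
structure CausalSpace (T : Type*) (Ω : Type*) [mΩ : MeasurableSpace Ω] where
  /-- the sub-σ-algebra `ℋ_S` generated by the coordinates in `S` -/
  H : Set T → MeasurableSpace Ω
  H_le : ∀ S, H S ≤ mΩ
  H_empty : H ∅ = ⊥
  H_univ : H Set.univ = mΩ
  H_mono : ∀ {S U : Set T}, S ⊆ U → H S ≤ H U
  /-- the probability measure -/
  P : Measure Ω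
  P_prob : IsProbabilityMeasure P
  /-- the causal mechanism: `K S ω` is the measure `K_S(ω, ·)` -/
  K : Set T → Ω → Measure Ω
  K_prob : ∀ S ω, IsProbabilityMeasure (K S ω)
  K_meas : ∀ (S : Set T) {A : Set Ω}, MeasurableSet A → Measurable[H S] fun ω => K S ω A
  K_empty : ∀ (ω : Ω) {A : Set Ω}, MeasurableSet A → K ∅ ω A = P A
  K_inter : ∀ (S : Set T) (ω : Ω) {A B : Set Ω}, MeasurableSet[H S] A → MeasurableSet B →
    K S ω (A ∩ B) = A.indicator (fun _ => (1 : ENNReal)) ω * K S ω B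

/-- A causal transformation `(κ, ρ) : 𝒞¹ → 𝒞²`: a probability kernel `κ` from `(Ω¹, ℋ¹)` to
`(Ω², ℋ²)` together with `ρ : T¹ → T²` such that the pair is admissible and satisfies
distributional and interventional consistency. -/
structure IsCausalTransformation {T1 T2 Ω1 Ω2 : Type*}
    [MeasurableSpace Ω1] [MeasurableSpace Ω2]
    (C1 : CausalSpace T1 Ω1) (C2 : CausalSpace T2 Ω2)
    (κ : Ω1 → Measure Ω2) (ρ : T1 → T2) : Prop where
  /-- `κ` is a probability kernel -/
  kernel_prob : ∀ ω, IsProbabilityMeasure (κ ω)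
  kernel_meas : ∀ A : Set Ω2, MeasurableSet A → Measurable fun ω => κ ω A
  /-- admissibility: `κ(·, A)` is `ℋ¹_{ρ⁻¹(S)}`-measurable for `S ⊆ ρ(T¹)`, `A ∈ ℋ²_S` -/
  admissible : ∀ S : Set T2, S ⊆ Set.range ρ → ∀ A : Set Ω2,
    MeasurableSet[C2.H S] A → Measurable[C1.H (ρ ⁻¹' S)] fun ω => κ ω A
  /-- distributional consistency -/
  dist : ∀ A : Set Ω2, MeasurableSet A → ∫⁻ ω, κ ω A ∂C1.P = C2.P A
  /-- interventional consistency -/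
  interv : ∀ S : Set T2, S ⊆ Set.range ρ → ∀ A : Set Ω2,
    MeasurableSet[C2.H (Set.range ρ)] A → ∀ ω : Ω1,
    ∫⁻ ω', κ ω' A ∂(C1.K (ρ ⁻¹' S) ω) = ∫⁻ ω', C2.K S ω' A ∂(κ ω)


/-- Helper: measurability of a parametrized lintegral with respect to sub-σ-algebras. -/
lemma measurable_lintegral_kernel_sub {Ω1 Ω2 : Type*} {m2 : MeasurableSpace Ω2}
    [m1' : MeasurableSpace Ω1] [m2' : MeasurableSpace Ω2]
    (hm2 : m2' ≤ m2)
    (κ : Ω1 → @Measure Ω2 m2)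
    (hκ : ∀ A : Set Ω2, MeasurableSet A → Measurable fun ω => κ ω A)
    (g : Ω2 → ENNReal) (hg : Measurable g) :
    Measurable fun ω => ∫⁻ x, g x ∂(κ ω) := by
  have hf : Measurable fun ω => (κ ω).trim hm2 := by
    refine Measure.measurable_of_measurable_coe _ fun s hs => ?_
    simpa [trim_measurableSet_eq hm2 hs] using hκ s hs
  have h2 : Measurable fun ω => ∫⁻ x, g x ∂((κ ω).trim hm2) :=
    (Measure.measurable_lintegral hg).comp hf
  have heq : (fun ω => ∫⁻ x, g x ∂((κ ω).trim hm2)) = fun ω => ∫⁻ x, g x ∂(κ ω) := by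
    funext ω; exact lintegral_trim hm2 hg
  rwa [heq] at h2

/-- Composition of causal transformations.  If `(κ₁, ρ₁) : 𝒞¹ → 𝒞²` and
`(κ₂, ρ₂) : 𝒞² → 𝒞³` are causal transformations and `(κ₁, ρ₁)` is an abstraction (`ρ₁`
surjective), then the concatenation `((κ₁ ∘ κ₂), ρ₂ ∘ ρ₁) : 𝒞¹ → 𝒞³`, where
`(κ₁ ∘ κ₂)(ω, A) = ∫ κ₁(ω, dω₂) κ₂(ω₂, A)`, is a causal transformation. -/
theorem composition_of_causal_transformations {T1 T2 T3 Ω1 Ω2 Ω3 : Type*}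
    [MeasurableSpace Ω1] [MeasurableSpace Ω2] [MeasurableSpace Ω3]
    (C1 : CausalSpace T1 Ω1) (C2 : CausalSpace T2 Ω2) (C3 : CausalSpace T3 Ω3)
    (κ1 : Ω1 → Measure Ω2) (ρ1 : T1 → T2) (κ2 : Ω2 → Measure Ω3) (ρ2 : T2 → T3)
    (h1 : IsCausalTransformation C1 C2 κ1 ρ1)
    (h2 : IsCausalTransformation C2 C3 κ2 ρ2)
    (habs : Function.Surjective ρ1) :
    IsCausalTransformation C1 C3 (fun ω => (κ1 ω).bind κ2) (ρ2 ∘ ρ1) := by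
  have hκ1 : Measurable κ1 :=
    Measure.measurable_of_measurable_coe _ fun s hs => h1.kernel_meas s hs
  have hκ2 : Measurable κ2 :=
    Measure.measurable_of_measurable_coe _ fun s hs => h2.kernel_meas s hs
  have hrange1 : Set.range ρ1 = Set.univ := habs.range_eq
  have hrange : Set.range (ρ2 ∘ ρ1) = Set.range ρ2 := by
    rw [Set.range_comp, hrange1, Set.image_univ]
  have hbind : ∀ (ω : Ω1) (A : Set Ω3), MeasurableSet A →
      (κ1 ω).bind κ2 A = ∫⁻ ω2, κ2 ω2 A ∂(κ1 ω) := fun ω A hA =>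
    Measure.bind_apply hA hκ2.aemeasurable
  have hprob : ∀ ω, IsProbabilityMeasure ((κ1 ω).bind κ2) := by
    intro ω
    constructor
    rw [hbind ω _ MeasurableSet.univ]
    have := h1.kernel_prob ω
    simp [fun ω2 => (h2.kernel_prob ω2).measure_univ]
  refine ⟨hprob, ?_, ?_, ?_, ?_⟩
  · -- kernel_meas
    intro A hA
    have heq : (fun ω => (κ1 ω).bind κ2 A) = fun ω => ∫⁻ ω2, κ2 ω2 A ∂(κ1 ω) := by
      funext ω; exact hbind ω A hA
    rw [heq]
    exact (Measure.measurable_lintegral (h2.kernel_meas A hA)).comp hκ1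
  · -- admissible
    intro S hS A hA
    have hS2 : ρ2 ⁻¹' S ⊆ Set.range ρ1 := by rw [hrange1]; exact Set.subset_univ _
    have hSr : S ⊆ Set.range ρ2 := hS.trans hrange.subset
    have hg : Measurable[C2.H (ρ2 ⁻¹' S)] fun ω2 => κ2 ω2 A := h2.admissible S hSr A hA
    have hκ1S : ∀ B : Set Ω2, MeasurableSet[C2.H (ρ2 ⁻¹' S)] B →
        Measurable[C1.H (ρ1 ⁻¹' (ρ2 ⁻¹' S))] fun ω => κ1 ω B :=
      fun B hB => h1.admissible (ρ2 ⁻¹' S) hS2 B hB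
    have key : Measurable[C1.H (ρ1 ⁻¹' (ρ2 ⁻¹' S))] fun ω => ∫⁻ x, κ2 x A ∂(κ1 ω) :=
      @measurable_lintegral_kernel_sub Ω1 Ω2 _ (C1.H (ρ1 ⁻¹' (ρ2 ⁻¹' S)))
        (C2.H (ρ2 ⁻¹' S)) (C2.H_le _) κ1 hκ1S _ hg
    have heq : (fun ω => (κ1 ω).bind κ2 A) = fun ω => ∫⁻ x, κ2 x A ∂(κ1 ω) := by
      funext ω; exact hbind ω A (C3.H_le S A hA)
    rw [Set.preimage_comp, heq]
    exact key
  · -- dist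
    intro A hA
    have hP2 : C1.P.bind κ1 = C2.P := by
      ext B hB
      rw [Measure.bind_apply hB hκ1.aemeasurable, h1.dist B hB]
    calc ∫⁻ ω, (κ1 ω).bind κ2 A ∂C1.P
        = ∫⁻ ω, ∫⁻ ω2, κ2 ω2 A ∂(κ1 ω) ∂C1.P :=
          lintegral_congr fun ω => hbind ω A hA
      _ = ∫⁻ ω2, κ2 ω2 A ∂(C1.P.bind κ1) :=
          (Measure.lintegral_bind hκ1.aemeasurable
            (h2.kernel_meas A hA).aemeasurable).symm
      _ = ∫⁻ ω2, κ2 ω2 A ∂C2.P := by rw [hP2]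
      _ = C3.P A := h2.dist A hA
  · -- interv
    intro S hS A hA ω
    have hSr : S ⊆ Set.range ρ2 := hS.trans hrange.subset
    have hA' : MeasurableSet[C3.H (Set.range ρ2)] A := by rwa [hrange] at hA
    have hAm : MeasurableSet A := C3.H_le _ A hA'
    have hS2 : ρ2 ⁻¹' S ⊆ Set.range ρ1 := by rw [hrange1]; exact Set.subset_univ _
    set U : Set T2 := ρ2 ⁻¹' S with hU
    have hK2U : Measurable (C2.K U) := by
      refine Measure.measurable_of_measurable_coe _ fun s hs => ?_
      exact (C2.K_meas U hs).mono (C2.H_le U) le_rfl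
    have hmeq : (C1.K (ρ1 ⁻¹' U) ω).bind κ1 = (κ1 ω).bind (C2.K U) := by
      ext B hB
      rw [Measure.bind_apply hB hκ1.aemeasurable,
        Measure.bind_apply hB hK2U.aemeasurable]
      have hB' : MeasurableSet[C2.H (Set.range ρ1)] B := by
        rw [hrange1, C2.H_univ]; exact hB
      exact h1.interv U hS2 B hB' ω
    have hg : Measurable fun ω2 => κ2 ω2 A := h2.kernel_meas A hAm
    have hh : Measurable fun ω2 => C3.K S ω2 A :=
      (C3.K_meas S hAm).mono (C3.H_le S) le_rfl
    calc ∫⁻ ω', (κ1 ω').bind κ2 A ∂(C1.K ((ρ2 ∘ ρ1) ⁻¹' S) ω)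
        = ∫⁻ ω', ∫⁻ ω2, κ2 ω2 A ∂(κ1 ω') ∂(C1.K (ρ1 ⁻¹' U) ω) := by
          rw [Set.preimage_comp]
          exact lintegral_congr fun ω' => hbind ω' A hAm
      _ = ∫⁻ ω2, κ2 ω2 A ∂((C1.K (ρ1 ⁻¹' U) ω).bind κ1) :=
          (Measure.lintegral_bind hκ1.aemeasurable hg.aemeasurable).symm
      _ = ∫⁻ ω2, κ2 ω2 A ∂((κ1 ω).bind (C2.K U)) := by rw [hmeq]
      _ = ∫⁻ ω2, ∫⁻ ω2', κ2 ω2' A ∂(C2.K U ω2) ∂(κ1 ω) :=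
          Measure.lintegral_bind hK2U.aemeasurable hg.aemeasurable
      _ = ∫⁻ ω2, ∫⁻ ω2', C3.K S ω2' A ∂(κ2 ω2) ∂(κ1 ω) :=
          lintegral_congr fun ω2 => h2.interv S hSr A hA' ω2
      _ = ∫⁻ ω2', C3.K S ω2' A ∂((κ1 ω).bind κ2) :=
          (Measure.lintegral_bind hκ2.aemeasurable hh.aemeasurable).symm
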